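/- There exists a set S ⊆ ℝ such that: (1) for every m ∈ ℕ with m ≥ 1 and every k ∈ ℤ, m^k · S = S and m^k + S = S; (2) S, −S, and some subset Q of ℚ partition ℝ (S ∩ (−S) = ∅, S ∩ Q = ∅, (−S) ∩ Q = ∅, and S ∪ (−S) ∪ Q = ℝ); (3) there is an irrational ξ with S + ξ ⊆ S. -/

import Mathlib

open Cardinal

noncomputable section

private def pQ : Submodule ℚ ℝ := Submodule.span ℚ {1}

private lemma mem_pQ (x : ℝ) : x ∈ pQ ↔ ∃ q : ℚ, (q : ℝ) = x := by
  simp [pQ, Submodule.mem_span_singleton, Rat.smul_one_eq_cast]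

private lemma rank_quot : Module.rank ℚ (ℝ ⧸ pQ) = continuum := by
  have h := rank_quotient_add_rank_of_divisionRing pQ
  rw [Real.rank_rat_real] at h
  have hp : Module.rank ℚ pQ ≤ 1 := by
    exact (rank_span_le (R := ℚ) (M := ℝ) {1}).trans (by simp)
  have hle : Module.rank ℚ (ℝ ⧸ pQ) ≤ continuum :=
    le_self_add.trans h.le
  have hinf : ℵ₀ ≤ Module.rank ℚ (ℝ ⧸ pQ) := by
    by_contra hfin
    push_neg at hfin
    have : (𝔠 : Cardinal) < ℵ₀ := by
      calc 𝔠 = Module.rank ℚ (ℝ ⧸ pQ) + Module.rank ℚ pQ := h.symm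
      _ ≤ Module.rank ℚ (ℝ ⧸ pQ) + 1 := by gcongr
      _ < ℵ₀ := add_lt_aleph0 hfin one_lt_aleph0
    exact absurd this (not_lt.2 aleph0_lt_continuum.le)
  have hge : continuum ≤ Module.rank ℚ (ℝ ⧸ pQ) := by
    calc 𝔠 = Module.rank ℚ (ℝ ⧸ pQ) + Module.rank ℚ pQ := h.symm
    _ ≤ Module.rank ℚ (ℝ ⧸ pQ) + 1 := by gcongr
    _ = Module.rank ℚ (ℝ ⧸ pQ) := Cardinal.add_eq_left hinf (le_trans one_le_aleph0 hinf)
  exact le_antisymm hle hge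

private def eQ : (ℝ ⧸ pQ) ≃ₗ[ℚ] ℝ :=
  (nonempty_linearEquiv_of_rank_eq (rank_quot.trans Real.rank_rat_real.symm)).some

private def fQ : ℝ →ₗ[ℚ] ℝ := (eQ : (ℝ ⧸ pQ) →ₗ[ℚ] ℝ) ∘ₗ pQ.mkQ

private lemma fQ_eq_zero_iff (x : ℝ) : fQ x = 0 ↔ ∃ q : ℚ, (q : ℝ) = x := by
  rw [← mem_pQ]
  constructor
  · intro h
    have : pQ.mkQ x = 0 := by
      have := eQ.injective (a₁ := pQ.mkQ x) (a₂ := 0)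
      simpa [fQ] using this (by simpa [fQ] using h)
    simpa [Submodule.mkQ_apply, Submodule.Quotient.mk_eq_zero] using this
  · intro h
    simp [fQ, Submodule.mkQ_apply, (Submodule.Quotient.mk_eq_zero _).2 h]

private lemma fQ_rat (q : ℚ) : fQ (q : ℝ) = 0 := (fQ_eq_zero_iff _).2 ⟨q, rfl⟩

private lemma fQ_rat_mul (q : ℚ) (x : ℝ) : fQ ((q : ℝ) * x) = q * fQ x := by
  have : (q : ℝ) * x = q • x := by rw [Rat.smul_def]
  rw [this, map_smul, Rat.smul_def]

private lemma fQ_add (x y : ℝ) : fQ (x + y) = fQ x + fQ y := map_add _ _ _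

private lemma fQ_surj : Function.Surjective fQ :=
  eQ.surjective.comp (Submodule.mkQ_surjective pQ)

end

private def SQ : Set ℝ := {x | 0 < fQ x}

private lemma mul_image (q : ℚ) (hq : 0 < q) : (fun x => (q : ℝ) * x) '' SQ = SQ := by
  ext y
  simp only [Set.mem_image, SQ, Set.mem_setOf_eq]
  constructor
  · rintro ⟨x, hx, rfl⟩
    rw [fQ_rat_mul]
    have : (0:ℝ) < (q:ℝ) := by exact_mod_cast hq
    positivity
  · intro hy
    refine ⟨(q : ℝ)⁻¹ * y, ?_, ?_⟩
    · rw [show ((q:ℝ)⁻¹ = ((q⁻¹ : ℚ) : ℝ)) by push_cast; ring, fQ_rat_mul]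
      have : (0:ℝ) < ((q⁻¹:ℚ):ℝ) := by exact_mod_cast inv_pos.2 hq
      positivity
    · field_simp

private lemma add_image (q : ℚ) : (fun x => (q : ℝ) + x) '' SQ = SQ := by
  ext y
  simp only [Set.mem_image, SQ, Set.mem_setOf_eq]
  constructor
  · rintro ⟨x, hx, rfl⟩
    rwa [fQ_add, fQ_rat, zero_add]
  · intro hy
    exact ⟨y - q, by rwa [show y - (q:ℝ) = (-q : ℚ) + y by push_cast; ring,
      fQ_add, fQ_rat, zero_add], by ring⟩

/-- Existence of a set S ⊆ ℝ with: m^k·S = m^k + S = S for all m ≥ 1, k ∈ ℤ;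
S ⊔ (−S) ⊔ Q = ℝ for some Q ⊆ ℚ; and S + ξ ⊆ S for some irrational ξ. -/
theorem stmt_5 :
    ∃ S : Set ℝ,
      (∀ m : ℕ, 1 ≤ m → ∀ k : ℤ,
        (fun x => (m : ℝ) ^ k * x) '' S = S ∧ (fun x => (m : ℝ) ^ k + x) '' S = S) ∧
      (∃ Q : Set ℝ, Q ⊆ Set.range ((↑) : ℚ → ℝ) ∧
        S ∩ (-S) = ∅ ∧ S ∩ Q = ∅ ∧ (-S) ∩ Q = ∅ ∧ S ∪ (-S) ∪ Q = Set.univ) ∧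
      (∃ ξ : ℝ, Irrational ξ ∧ (fun x => x + ξ) '' S ⊆ S) := by
  refine ⟨SQ, ?_, ?_, ?_⟩
  · intro m hm k
    have hm0 : (0:ℚ) < (m:ℚ) := by exact_mod_cast hm
    have hcast : ((((m:ℚ)^k : ℚ)) : ℝ) = (m : ℝ) ^ k := by push_cast; ring
    constructor
    · rw [← hcast]; exact mul_image _ (zpow_pos hm0 k)
    · rw [← hcast]; exact add_image _
  · refine ⟨{x | fQ x = 0}, ?_, ?_, ?_, ?_, ?_⟩
    · intro x hx
      obtain ⟨q, hq⟩ := (fQ_eq_zero_iff x).1 hx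
      exact ⟨q, hq⟩
    · ext x
      simp only [Set.mem_inter_iff, Set.mem_neg, SQ, Set.mem_setOf_eq, Set.mem_empty_iff_false,
        iff_false, not_and, map_neg]
      intro h1 h2
      linarith
    · ext x
      simp only [Set.mem_inter_iff, SQ, Set.mem_setOf_eq, Set.mem_empty_iff_false, iff_false,
        not_and]
      intro h1 h2
      linarith
    · ext x
      simp only [Set.mem_inter_iff, Set.mem_neg, SQ, Set.mem_setOf_eq, Set.mem_empty_iff_false,
        iff_false, not_and, map_neg]
      intro h1 h2
      linarith
    · ext x
      simp only [Set.mem_union, Set.mem_neg, SQ, Set.mem_setOf_eq, Set.mem_univ, iff_true,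
        map_neg]
      rcases lt_trichotomy (fQ x) 0 with h | h | h
      · exact Or.inl (Or.inr (by linarith))
      · exact Or.inr h
      · exact Or.inl (Or.inl h)
  · obtain ⟨ξ, hξ⟩ := fQ_surj 1
    refine ⟨ξ, ?_, ?_⟩
    · rintro ⟨q, rfl⟩
      rw [fQ_rat] at hξ
      exact one_ne_zero hξ.symm
    · rintro y ⟨x, hx, rfl⟩
      simp only [SQ, Set.mem_setOf_eq] at hx ⊢
      rw [fQ_add, hξ]
      linarith
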